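/- If C ⊆ ℝⁿ is a rational polyhedral cone, then C ∩ ℤⁿ is a finitely generated additive submonoid of ℤⁿ (an affine semigroup), and it is pointed if and only if C is a pointed cone (contains no line). -/

import Mathlib

noncomputable def rcast (n : ℕ) : (Fin n → ℤ) →+ (Fin n → ℝ) where
  toFun a := fun j => (a j : ℝ)
  map_zero' := by funext j; simp
  map_add' a b := by funext j; push_cast; simp

lemma rcast_inj {n : ℕ} {a : Fin n → ℤ} (h : rcast n a = 0) : a = 0 := by
  funext j
  have := congrFun h j
  simpa [rcast] using this

theorem stmt1 (n m : ℕ) (v : Fin m → (Fin n → ℤ)) (C : Set (Fin n → ℝ))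
    (hC : C = {x | ∃ c : Fin m → ℝ, (∀ i, 0 ≤ c i) ∧
      x = ∑ i, c i • (fun j => (v i j : ℝ))}) :
    ∃ M : AddSubmonoid (Fin n → ℤ), M.FG ∧
      ((M : Set (Fin n → ℤ)) = {a : Fin n → ℤ | (fun j => (a j : ℝ)) ∈ C}) ∧
      ((∀ a ∈ M, ∀ b ∈ M, a + b = 0 → a = 0) ↔ (∀ x ∈ C, -x ∈ C → x = 0)) := by
  classical
  set w : Fin m → (Fin n → ℝ) := fun i j => (v i j : ℝ) with hw
  have hιw : ∀ i, rcast n (v i) = w i := fun i => rfl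
  have hιa : ∀ a : Fin n → ℤ, (fun j => ((a j : ℝ))) = rcast n a := fun a => rfl
  have hCdef : C = {x | ∃ c : Fin m → ℝ, (∀ i, 0 ≤ c i) ∧ x = ∑ i, c i • w i} := hC
  clear hC
  -- C is closed under addition and contains 0
  have hC0 : (0 : Fin n → ℝ) ∈ C := by
    rw [hCdef]; exact ⟨0, fun i => le_refl 0, by simp⟩
  have hCadd : ∀ x ∈ C, ∀ y ∈ C, x + y ∈ C := by
    rw [hCdef]
    rintro x ⟨c, hc, rfl⟩ y ⟨d, hd, rfl⟩
    refine ⟨c + d, fun i => add_nonneg (hc i) (hd i), ?_⟩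
    rw [← Finset.sum_add_distrib]
    congr 1; funext i; rw [Pi.add_apply, add_smul]
  -- each w i is in C
  have hwC : ∀ i, w i ∈ C := by
    intro i
    rw [hCdef]
    refine ⟨fun k => if k = i then 1 else 0, fun k => by positivity, ?_⟩
    simp [Finset.sum_ite_eq']
  -- the finite generating set
  set S : Set (Fin n → ℤ) :=
    {a | ∃ c : Fin m → ℝ, (∀ i, 0 ≤ c i ∧ c i ≤ 1) ∧ rcast n a = ∑ i, c i • w i} with hS
  have hSfin : S.Finite := by
    have hsub : S ⊆ Set.pi Set.univ (fun j => Set.Icc (-(∑ i, |v i j|)) (∑ i, |v i j|)) := by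
      rintro a ⟨c, hc, hac⟩ j _
      have hj : (a j : ℝ) = ∑ i, c i * (v i j : ℝ) := by
        have := congrFun hac j
        simpa [rcast, Finset.sum_apply] using this
      have habs : |(a j : ℝ)| ≤ ∑ i, |(v i j : ℝ)| := by
        rw [hj]
        refine (Finset.abs_sum_le_sum_abs _ _).trans ?_
        refine Finset.sum_le_sum fun i _ => ?_
        rw [abs_mul]
        calc |c i| * |(v i j : ℝ)| ≤ 1 * |(v i j : ℝ)| := by
              apply mul_le_mul_of_nonneg_right _ (abs_nonneg _)
              rw [abs_of_nonneg (hc i).1]; exact (hc i).2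
          _ = |(v i j : ℝ)| := one_mul _
      have : |a j| ≤ ∑ i, |v i j| := by
        have := habs
        push_cast at this
        exact_mod_cast this
      exact Set.mem_Icc.2 (abs_le.1 this)
    exact Set.Finite.subset (Set.Finite.pi fun j => Set.finite_Icc _ _) hsub
  -- members of S are lattice points of C
  have hSC : ∀ a ∈ S, rcast n a ∈ C := by
    rintro a ⟨c, hc, hac⟩
    rw [hCdef]; exact ⟨c, fun i => (hc i).1, hac⟩
  -- v i ∈ S
  have hvS : ∀ i, v i ∈ S := by
    intro i
    refine ⟨fun k => if k = i then 1 else 0, fun k => by by_cases h : k = i <;> simp [h], ?_⟩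
    rw [hιw]
    simp [Finset.sum_ite_eq']
  -- key: closure S has the right carrier
  have hMeq : ((AddSubmonoid.closure S : AddSubmonoid (Fin n → ℤ)) : Set (Fin n → ℤ))
      = {a : Fin n → ℤ | (fun j => (a j : ℝ)) ∈ C} := by
    apply Set.eq_of_subset_of_subset
    · intro a ha
      induction ha using AddSubmonoid.closure_induction with
      | mem x hx => exact hSC x hx
      | zero => show rcast n 0 ∈ C; rw [map_zero]; exact hC0
      | add x y _ _ hx hy =>
          show rcast n (x + y) ∈ C
          rw [map_add]; exact hCadd _ hx _ hy
    · intro a ha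
      rw [Set.mem_setOf_eq, hιa, hCdef] at ha
      obtain ⟨c, hc, hac⟩ := ha
      set N : Fin m → ℕ := fun i => (⌊c i⌋).toNat with hN
      have hNc : ∀ i, (N i : ℝ) ≤ c i ∧ c i - (N i : ℝ) ≤ 1 := by
        intro i
        have h0 : (0:ℤ) ≤ ⌊c i⌋ := Int.floor_nonneg.2 (hc i)
        have hcast : ((N i : ℤ) : ℝ) = ((⌊c i⌋ : ℤ) : ℝ) := by
          rw [hN]; norm_cast; exact Int.toNat_of_nonneg h0
        push_cast at hcast
        constructor
        · rw [hcast]; exact Int.floor_le _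
        · rw [hcast]; linarith [Int.lt_floor_add_one (c i)]
      set r : Fin n → ℤ := a - ∑ i, N i • v i with hr
      have hrS : r ∈ S := by
        refine ⟨fun i => c i - N i, fun i => ⟨by dsimp only; linarith [(hNc i).1], by dsimp only; exact (hNc i).2⟩, ?_⟩
        rw [hr, map_sub, hac, map_sum]
        rw [← Finset.sum_sub_distrib]
        congr 1; funext i
        dsimp only
        rw [sub_smul, map_nsmul, hιw, Nat.cast_smul_eq_nsmul]
      have : a = (∑ i, N i • v i) + r := by rw [hr]; ring
      rw [this]
      exact AddSubmonoid.add_mem _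
        (AddSubmonoid.sum_mem _ fun i _ =>
          AddSubmonoid.nsmul_mem _ (AddSubmonoid.subset_closure (hvS i)) _)
        (AddSubmonoid.subset_closure hrS)
  refine ⟨AddSubmonoid.closure S, ⟨hSfin.toFinset, by rw [Set.Finite.coe_toFinset]⟩, hMeq, ?_⟩
  constructor
  · -- M pointed → C pointed
    intro hp x hx hnx
    by_contra hx0
    rw [hCdef] at hx hnx
    obtain ⟨c, hc, hxc⟩ := hx
    obtain ⟨d, hd, hnxd⟩ := hnx
    have hex : ∃ i, c i • w i ≠ 0 := by
      by_contra h
      push_neg at h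
      apply hx0
      rw [hxc]
      exact Finset.sum_eq_zero fun i _ => h i
    obtain ⟨i, hi⟩ := hex
    have hci : 0 < c i := by
      rcases lt_or_eq_of_le (hc i) with h | h
      · exact h
      · exact absurd (by rw [← h, zero_smul]) hi
    have hwi : w i ≠ 0 := fun h => hi (by rw [h, smul_zero])
    -- -w i ∈ C
    have hnwi : -w i ∈ C := by
      rw [hCdef]
      refine ⟨fun j => (d j + c j - (if j = i then c i else 0)) / c i, ?_, ?_⟩
      · intro j
        apply div_nonneg _ (le_of_lt hci)
        split
        · next h => subst h; linarith [hd j, hc j]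
        · simp only [sub_zero]; linarith [hd j, hc j]
      · have hsum : ∑ j, (d j + c j - (if j = i then c i else 0)) • w j = -(c i • w i) := by
          have h1 : ∑ j, (d j + c j) • w j = 0 := by
            have : ∑ j, (d j + c j) • w j = (∑ j, d j • w j) + ∑ j, c j • w j := by
              rw [← Finset.sum_add_distrib]; congr 1; funext j; rw [add_smul]
            rw [this, ← hnxd, ← hxc]; ring
          have h2 : ∑ j, (d j + c j - (if j = i then c i else 0)) • w j
              = (∑ j, (d j + c j) • w j) - ∑ j, (if j = i then c i else 0) • w j := by
            rw [← Finset.sum_sub_distrib]; congr 1; funext j; rw [sub_smul]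
          rw [h2, h1, zero_sub]
          congr 1
          simp [Finset.sum_ite_eq']
        have : -w i = (c i)⁻¹ • ∑ j, (d j + c j - (if j = i then c i else 0)) • w j := by
          rw [hsum, smul_neg, smul_smul, inv_mul_cancel₀ (ne_of_gt hci), one_smul]
        rw [this, Finset.smul_sum]
        congr 1; funext j
        dsimp only; rw [smul_smul, div_eq_inv_mul]
    -- now v i and -(v i) are lattice points of C
    have h1 : v i ∈ AddSubmonoid.closure S := AddSubmonoid.subset_closure (hvS i)
    have h2 : -(v i) ∈ AddSubmonoid.closure S := by
      have : -(v i) ∈ ((AddSubmonoid.closure S : AddSubmonoid (Fin n → ℤ)) : Set (Fin n → ℤ)) := by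
        rw [hMeq]
        show (fun j => ((-(v i)) j : ℝ)) ∈ C
        rw [hιa, map_neg, hιw]
        exact hnwi
      exact this
    have := hp (v i) h1 (-(v i)) h2 (by abel)
    apply hwi
    rw [← hιw, this, map_zero]
  · -- C pointed → M pointed
    intro hp a ha b hb hab
    have ha' : rcast n a ∈ C := by
      have := ha
      rw [← AddSubmonoid.mem_toSubsemigroup] at this
      have : a ∈ ((AddSubmonoid.closure S : AddSubmonoid (Fin n → ℤ)) : Set (Fin n → ℤ)) := ha
      rw [hMeq] at this
      exact this
    have hb' : rcast n b ∈ C := by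
      have : b ∈ ((AddSubmonoid.closure S : AddSubmonoid (Fin n → ℤ)) : Set (Fin n → ℤ)) := hb
      rw [hMeq] at this
      exact this
    have hnb : rcast n b = -(rcast n a) := by
      rw [← map_neg]; congr 1; exact eq_neg_of_add_eq_zero_right hab
    have := hp (rcast n a) ha' (by rw [← hnb]; exact hb')
    exact rcast_inj this
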